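/- Assume the Lenard relations χ_i^{n+1} = χ_{i+1}^n hold for all i and n ≥ 1, and that {H_1, H_j}_1 = 0 for all j, and X₁ satisfies X₁(H_i) = (i+1)H_{i+1} with [X₁, χ_j^1] = (j+1)χ_{j+1}^1 − 2χ_j^2. Then {H_i, H_j}_n = 0 for all i, j, n: all the Hamiltonians are in involution with respect to every bracket in the hierarchy. -/
import Mathlib


/-- Involutivity of the Toda Hamiltonians in the whole hierarchy of brackets
(Proposition 3 of the paper).  Vector fields are modelled as linear operators on
the space of functions `F`; `χ i n` is the Hamiltonian vector field of `H_i`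
with respect to the `n`-th bracket, so that `{H_i, H_j}_n = χ i n (H j)`.
Assume the Lenard relations `χ_i^{n+1} = χ_{i+1}^n`, the antisymmetry
`{H_i, H_j}_n = -{H_j, H_i}_n`, that `H₁` satisfies `{H_1, H_j}_1 = 0`,
`X₁(H_i) = (i+1) H_{i+1}` and `[X₁, χ_j^1] = (j+1) χ_{j+1}^1 − 2 χ_j^2`.
Then `{H_i, H_j}_n = 0` for all `i, j, n ≥ 1`. -/
theorem toda_hierarchy_involution {F : Type*} [AddCommGroup F] [Module ℝ F]
    (X₁ : Module.End ℝ F) (χ : ℕ → ℕ → Module.End ℝ F) (H : ℕ → F)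
    (hLenard : ∀ i n, 1 ≤ n → χ i (n + 1) = χ (i + 1) n)
    (hskew : ∀ i j n, χ i n (H j) = - χ j n (H i))
    (hbase : ∀ j, χ 1 1 (H j) = 0)
    (hX : ∀ i, X₁ (H i) = ((i : ℝ) + 1) • H (i + 1))
    (hcomm : ∀ j, ⁅X₁, χ j 1⁆ = ((j : ℝ) + 1) • χ (j + 1) 1 - (2 : ℝ) • χ j 2) :
    ∀ i j n, 1 ≤ i → 1 ≤ j → 1 ≤ n → χ i n (H j) = 0 := by
  -- reduce all brackets to the first one
  have hred : ∀ k i, χ i (k + 1) = χ (i + k) 1 := by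
    intro k
    induction k with
    | zero => intro i; rfl
    | succ m ih =>
      intro i
      have h1 : χ i (m + 1 + 1) = χ (i + 1) (m + 1) := hLenard i (m + 1) (Nat.le_add_left 1 m)
      rw [h1, ih (i + 1)]
      ring_nf
  -- the key fact: all first-bracket pairings vanish
  have key : ∀ i b, χ (i + 1) 1 (H b) = 0 := by
    intro i
    induction i with
    | zero => exact hbase
    | succ n ih =>
      match n, ih with
      | 0, _ =>
        -- χ 2 1 (H b) = χ 1 2 (H b) = -χ b 2 (H 1) = -χ (b+1) 1 (H 1) = χ 1 1 (H (b+1)) = 0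
        intro b
        have h1 : χ 2 1 = χ 1 2 := (hLenard 1 1 le_rfl).symm
        have h2 : χ b 2 = χ (b + 1) 1 := hLenard b 1 le_rfl
        rw [show (0:ℕ) + 1 + 1 = 2 from rfl, h1, hskew 1 b 2, h2, hskew (b+1) 1 1,
          hbase (b+1), neg_neg]
      | m + 1, ih =>
        intro b
        have hc := hcomm (m + 1 + 1)
        have happ := congrArg (fun f : Module.End ℝ F => f (H b)) hc
        simp only [Ring.lie_def, LinearMap.sub_apply, Module.End.mul_apply,
          LinearMap.smul_apply] at happ
        rw [ih b, map_zero, hX b] at happ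
        rw [map_smul, ih (b + 1), smul_zero] at happ
        have h2 : χ (m + 1 + 1) 2 = χ (m + 1 + 1 + 1) 1 := hLenard _ 1 le_rfl
        rw [h2] at happ
        rw [sub_self] at happ
        have happ' : (0 : F) = ((m : ℝ) + 1) • χ (m + 1 + 1 + 1) 1 (H b) := by
          rw [happ, ← sub_smul]
          push_cast
          ring_nf
        have hne : ((m : ℝ) + 1) ≠ 0 := by positivity
        have := (smul_eq_zero.mp happ'.symm).resolve_left hne
        exact this
  intro i j n hi hj hn
  obtain ⟨i', rfl⟩ : ∃ i', i = i' + 1 := ⟨i - 1, (Nat.succ_pred_eq_of_pos hi).symm⟩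
  obtain ⟨n', rfl⟩ : ∃ n', n = n' + 1 := ⟨n - 1, (Nat.succ_pred_eq_of_pos hn).symm⟩
  rw [hred n' (i' + 1)]
  have : i' + 1 + n' = (i' + n') + 1 := by ring
  rw [this]
  exact key (i' + n') j
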